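/- arXiv:2009.03358 — 2 statements merged into one kernel-verified Lean document; each statement's English description precedes it below -/
import Mathlib

section
/- C functionally determines Y (every pair of rows agreeing on all columns of C also agrees on all columns of Y) if and only if r(C) = r(C ∪ Y). -/
/-- Number of distinct restrictions of rows to the columns in `C`. -/
noncomputable def distinctCount {R : ℕ} {N V : Type*} (T : Fin R → N → V) (C : Set N) : ℕ :=
  Nat.card (Set.range fun i : Fin R => C.restrict (T i))

/-- `C` functionally determines `Y`: rows agreeing on all columns of `C`
agree on all columns of `Y`. -/
def FD {R : ℕ} {N V : Type*} (T : Fin R → N → V) (C Y : Set N) : Prop :=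
  ∀ i j : Fin R, (∀ c ∈ C, T i c = T j c) → ∀ y ∈ Y, T i y = T j y

theorem fd_iff_distinctCount_eq {R : ℕ} {N V : Type*} (T : Fin R → N → V) (C Y : Set N) :
    FD T C Y ↔ distinctCount T C = distinctCount T (C ∪ Y) := by
  classical
  set π : ((C ∪ Y : Set N) → V) → (C → V) :=
    fun g c => g ⟨c.1, Or.inl c.2⟩ with hπ
  have himg : (Set.range fun i : Fin R => C.restrict (T i)) =
      π '' (Set.range fun i : Fin R => (C ∪ Y : Set N).restrict (T i)) := by
    ext g
    constructor
    · rintro ⟨i, rfl⟩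
      exact ⟨(C ∪ Y : Set N).restrict (T i), ⟨i, rfl⟩, rfl⟩
    · rintro ⟨h, ⟨i, rfl⟩, rfl⟩
      exact ⟨i, rfl⟩
  have hfin : (Set.range fun i : Fin R => (C ∪ Y : Set N).restrict (T i)).Finite :=
    Set.finite_range _
  have hcard : ∀ S : Set ((C ∪ Y : Set N) → V), Nat.card S = S.ncard := fun S => rfl
  have key : FD T C Y ↔
      Set.InjOn π (Set.range fun i : Fin R => (C ∪ Y : Set N).restrict (T i)) := by
    constructor
    · intro hfd
      rintro g ⟨i, rfl⟩ h ⟨j, rfl⟩ heq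
      have hC : ∀ c ∈ C, T i c = T j c := by
        intro c hc
        exact congrFun heq ⟨c, hc⟩
      funext x
      rcases x.2 with hx | hx
      · exact hC x.1 hx
      · exact hfd i j hC x.1 hx
    · intro hinj i j hC y hy
      have : ((C ∪ Y : Set N).restrict (T i)) = ((C ∪ Y : Set N).restrict (T j)) := by
        apply hinj ⟨i, rfl⟩ ⟨j, rfl⟩
        funext c
        exact hC c.1 c.2
      exact congrFun this ⟨y, Or.inr hy⟩
  rw [key]
  unfold distinctCount
  rw [himg, Nat.card_coe_set_eq, Nat.card_coe_set_eq]
  constructor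
  · intro h
    exact Set.ncard_image_of_injOn h
  · intro h
    exact Set.injOn_of_ncard_image_eq h hfin
end

section
/- If every column of the addition set A is a descendant of Y (i.e., Y → {a} for each a ∈ A), then ẽ((C ∪ A) → Y) ≤ ẽ(C → Y); i.e., the count-ratio error ẽ is non-increasing under adding columns from Descendant(Y). -/
private lemma dc_mono {R : ℕ} {N V : Type*} (T : Fin R → N → V) {C D : Set N} (h : C ⊆ D) :
    distinctCount T C ≤ distinctCount T D := by
  classical
  apply Nat.card_le_card_of_surjective
    (f := fun x : Set.range (fun i : Fin R => D.restrict (T i)) =>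
      (⟨fun c : C => x.1 ⟨c.1, h c.2⟩, by
        obtain ⟨i, hi⟩ := x.2
        exact ⟨i, by ext c; simp [← hi, Set.restrict]⟩⟩ :
        Set.range (fun i : Fin R => C.restrict (T i))))
  rintro ⟨y, i, rfl⟩
  exact ⟨⟨D.restrict (T i), ⟨i, rfl⟩⟩, rfl⟩

private lemma dc_pos {R : ℕ} {N V : Type*} (T : Fin R → N → V) (C : Set N) (hR : 0 < R) :
    0 < distinctCount T C := by
  have : Nonempty (Set.range fun i : Fin R => C.restrict (T i)) :=
    ⟨_, ⟨⟨0, hR⟩, rfl⟩⟩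
  exact Nat.card_pos

private lemma dc_fd {R : ℕ} {N V : Type*} (T : Fin R → N → V) (C Y A : Set N)
    (hA : ∀ a ∈ A, FD T Y {a}) :
    distinctCount T (C ∪ Y ∪ A) = distinctCount T (C ∪ Y) := by
  classical
  have hsub : C ∪ Y ⊆ C ∪ Y ∪ A := Set.subset_union_left
  refine Nat.card_eq_of_bijective
    (fun x : Set.range (fun i : Fin R => (C ∪ Y ∪ A).restrict (T i)) =>
      (⟨fun c : (C ∪ Y : Set N) => x.1 ⟨c.1, hsub c.2⟩, by
        obtain ⟨i, hi⟩ := x.2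
        exact ⟨i, by ext c; simp [← hi, Set.restrict]⟩⟩ :
        Set.range (fun i : Fin R => (C ∪ Y).restrict (T i)))) ⟨?_, ?_⟩
  · rintro ⟨x, i, rfl⟩ ⟨y, j, rfl⟩ hxy
    have hag : ∀ c ∈ C ∪ Y, T i c = T j c := by
      intro c hc
      have := congrFun (Subtype.ext_iff.mp hxy) ⟨c, hc⟩
      simpa [Set.restrict] using this
    have hagY : ∀ y ∈ Y, T i y = T j y := fun y hy => hag y (Or.inr hy)
    apply Subtype.ext
    funext ⟨n, hn⟩
    show T i n = T j n
    rcases hn with hn | hn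
    · exact hag n hn
    · exact hA n hn i j hagY n rfl
  · rintro ⟨y, i, rfl⟩
    exact ⟨⟨(C ∪ Y ∪ A).restrict (T i), ⟨i, rfl⟩⟩, rfl⟩

theorem tilde_error_anti_of_descendants {R : ℕ} {N V : Type*} (T : Fin R → N → V)
    (C Y A : Set N) (hA : ∀ a ∈ A, FD T Y {a}) :
    1 - (distinctCount T (C ∪ A) : ℝ) / (distinctCount T (C ∪ A ∪ Y) : ℝ) ≤
      1 - (distinctCount T C : ℝ) / (distinctCount T (C ∪ Y) : ℝ) := by
  rcases Nat.eq_zero_or_pos R with rfl | hR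
  · have h0 : ∀ D : Set N, distinctCount T D = 0 := by
      intro D
      simp [distinctCount, Nat.card_eq_zero, Set.range_eq_empty]
    simp [h0]
  · apply sub_le_sub_left
    have hEq : distinctCount T (C ∪ A ∪ Y) = distinctCount T (C ∪ Y) := by
      have : C ∪ A ∪ Y = C ∪ Y ∪ A := by
        rw [Set.union_right_comm]
      rw [this, dc_fd T C Y A hA]
    rw [hEq]
    have hpos : (0:ℝ) < (distinctCount T (C ∪ Y) : ℝ) := by
      exact_mod_cast dc_pos T (C ∪ Y) hR
    rw [div_le_div_iff_of_pos_right hpos]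
    exact_mod_cast dc_mono T Set.subset_union_left
end
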